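/- Let τ ∈ (0, 1/2], Δ > 0 with 3Δ < τ, and for each j ∈ I let c_j ∈ ℕ satisfy |c_j − nτ| ≤ 3nΔ, and let v_j, w_j be reals with 0 ≤ v_j ≤ c_j and 0 ≤ w_j ≤ n − c_j. Then Σ_{j∈I} v_j / Σ_{j∈I} c_j − Σ_{j∈I} w_j / Σ_{j∈I}(n − c_j) ≤ (1/|I|) Σ_{j∈I} (v_j/c_j − w_j/(n−c_j)) + 6Δ/(τ − 3Δ) + 6Δ/(1 − τ + 3Δ). -/

import Mathlib

open Finset

lemma ratio_sum_upper {ι : Type*} [Fintype ι] [Nonempty ι] (a b : ℝ) (ha : 0 < a)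
    (d u : ι → ℝ) (hd1 : ∀ j, a ≤ d j) (hd2 : ∀ j, d j ≤ b)
    (hu0 : ∀ j, 0 ≤ u j) (hu1 : ∀ j, u j ≤ d j) :
    (∑ j, u j) / (∑ j, d j) ≤
      (1 / (Fintype.card ι : ℝ)) * (∑ j, u j / d j) + (b - a) / a := by
  set m : ℝ := (Fintype.card ι : ℝ) with hm
  have hm0 : 0 < m := by rw [hm]; exact_mod_cast Fintype.card_pos (α := ι)
  have hdj : ∀ j, 0 < d j := fun j => lt_of_lt_of_le ha (hd1 j)
  have hab : a ≤ b := le_trans (hd1 (Classical.arbitrary ι)) (hd2 _)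
  have hr0 : ∀ j, 0 ≤ u j / d j := fun j => div_nonneg (hu0 j) (hdj j).le
  have hr1 : ∀ j, u j / d j ≤ 1 := fun j => (div_le_one (hdj j)).mpr (hu1 j)
  set S : ℝ := ∑ j, u j / d j with hS
  have hS0 : 0 ≤ S := Finset.sum_nonneg fun j _ => hr0 j
  have hS1 : S ≤ m := by
    calc S ≤ ∑ _j : ι, (1:ℝ) := Finset.sum_le_sum fun j _ => hr1 j
    _ = m := by simp [hm]
  have hd_sum : m * a ≤ ∑ j, d j := by
    calc m * a = ∑ _j : ι, a := by simp [mul_comm, hm]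
    _ ≤ ∑ j, d j := Finset.sum_le_sum fun j _ => hd1 j
  have hu_sum0 : 0 ≤ ∑ j, u j := Finset.sum_nonneg fun j _ => hu0 j
  have hma : 0 < m * a := mul_pos hm0 ha
  have step1 : (∑ j, u j) / (∑ j, d j) ≤ (∑ j, u j) / (m * a) :=
    div_le_div_of_nonneg_left hu_sum0 hma hd_sum
  have hnum : (∑ j, u j) ≤ S * b := by
    have : ∀ j, u j ≤ (u j / d j) * b := by
      intro j
      calc u j = (u j / d j) * d j := (div_mul_cancel₀ (u j) (hdj j).ne').symm
      _ ≤ (u j / d j) * b := mul_le_mul_of_nonneg_left (hd2 j) (hr0 j)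
    calc (∑ j, u j) ≤ ∑ j, (u j / d j) * b := Finset.sum_le_sum fun j _ => this j
    _ = S * b := by rw [hS, Finset.sum_mul]
  have step2 : (∑ j, u j) / (m * a) ≤ (S * b) / (m * a) := by
    gcongr
  have key : S * b ≤ S * a + m * (b - a) := by nlinarith
  have step3 : (S * b) / (m * a) ≤ (S * a + m * (b - a)) / (m * a) := by gcongr
  have heq : (S * a + m * (b - a)) / (m * a) = 1 / m * S + (b - a) / a := by
    field_simp
  rw [heq] at step3
  linarith

lemma ratio_sum_lower {ι : Type*} [Fintype ι] [Nonempty ι] (a b : ℝ) (ha : 0 < a)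
    (d u : ι → ℝ) (hd1 : ∀ j, a ≤ d j) (hd2 : ∀ j, d j ≤ b)
    (hu0 : ∀ j, 0 ≤ u j) (hu1 : ∀ j, u j ≤ d j) :
    (1 / (Fintype.card ι : ℝ)) * (∑ j, u j / d j) ≤
      (∑ j, u j) / (∑ j, d j) + (b - a) / b := by
  set m : ℝ := (Fintype.card ι : ℝ) with hm
  have hm0 : 0 < m := by rw [hm]; exact_mod_cast Fintype.card_pos (α := ι)
  have hdj : ∀ j, 0 < d j := fun j => lt_of_lt_of_le ha (hd1 j)
  have hab : a ≤ b := le_trans (hd1 (Classical.arbitrary ι)) (hd2 _)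
  have hb : 0 < b := lt_of_lt_of_le ha hab
  have hr0 : ∀ j, 0 ≤ u j / d j := fun j => div_nonneg (hu0 j) (hdj j).le
  have hr1 : ∀ j, u j / d j ≤ 1 := fun j => (div_le_one (hdj j)).mpr (hu1 j)
  set S : ℝ := ∑ j, u j / d j with hS
  have hS0 : 0 ≤ S := Finset.sum_nonneg fun j _ => hr0 j
  have hS1 : S ≤ m := by
    calc S ≤ ∑ _j : ι, (1:ℝ) := Finset.sum_le_sum fun j _ => hr1 j
    _ = m := by simp [hm]
  have hd_sum : ∑ j, d j ≤ m * b := by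
    calc (∑ j, d j) ≤ ∑ _j : ι, b := Finset.sum_le_sum fun j _ => hd2 j
    _ = m * b := by simp [mul_comm, hm]
  have hd_pos : 0 < ∑ j, d j := by
    calc (0:ℝ) < m * a := mul_pos hm0 ha
    _ ≤ ∑ j, d j := by
        calc m * a = ∑ _j : ι, a := by simp [mul_comm, hm]
        _ ≤ ∑ j, d j := Finset.sum_le_sum fun j _ => hd1 j
  have hu_sum0 : 0 ≤ ∑ j, u j := Finset.sum_nonneg fun j _ => hu0 j
  have hmb : 0 < m * b := mul_pos hm0 hb
  have step1 : (∑ j, u j) / (m * b) ≤ (∑ j, u j) / (∑ j, d j) :=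
    div_le_div_of_nonneg_left hu_sum0 hd_pos hd_sum
  have hnum : S * a ≤ (∑ j, u j) := by
    have : ∀ j, (u j / d j) * a ≤ u j := by
      intro j
      calc (u j / d j) * a ≤ (u j / d j) * d j := mul_le_mul_of_nonneg_left (hd1 j) (hr0 j)
      _ = u j := div_mul_cancel₀ (u j) (hdj j).ne'
    calc S * a = ∑ j, (u j / d j) * a := by rw [hS, Finset.sum_mul]
    _ ≤ ∑ j, u j := Finset.sum_le_sum fun j _ => this j
  have step2 : (S * a) / (m * b) ≤ (∑ j, u j) / (m * b) := by gcongr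
  have key : S * b ≤ S * a + m * (b - a) := by nlinarith
  have heq : (S * a + m * (b - a)) / (m * b) = S * a / (m * b) + (b - a) / b := by
    field_simp
  have step0 : 1 / m * S ≤ (S * a + m * (b - a)) / (m * b) := by
    rw [le_div_iff₀ hmb]
    have : 1 / m * S * (m * b) = S * b := by field_simp
    rw [this]
    exact key
  calc 1 / m * S ≤ (S * a + m * (b - a)) / (m * b) := step0
  _ = S * a / (m * b) + (b - a) / b := heq
  _ ≤ (∑ j, u j) / (m * b) + (b - a) / b := by linarith
  _ ≤ (∑ j, u j) / (∑ j, d j) + (b - a) / b := by linarith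

/-- Pooled-ratio lemma (Step 3 of the proof of Theorem 1): the pooled
demographic-parity-type ratio over merged sources is bounded by the average of the
per-source ratios plus an error term controlled by the disbalance bound. -/
theorem pooled_ratio_bound {ι : Type*} [Fintype ι] [Nonempty ι] (n : ℕ) (hn : 1 ≤ n)
    (τ Δ : ℝ) (hτ0 : 0 < τ) (hτ1 : τ ≤ 1 / 2) (hΔ : 0 < Δ) (h3Δ : 3 * Δ < τ)
    (c : ι → ℕ) (hc0 : ∀ j, 0 < c j) (hcn : ∀ j, c j < n)
    (hcτ : ∀ j, |(c j : ℝ) - n * τ| ≤ 3 * n * Δ)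
    (v w : ι → ℝ)
    (hv0 : ∀ j, 0 ≤ v j) (hv1 : ∀ j, v j ≤ (c j : ℝ))
    (hw0 : ∀ j, 0 ≤ w j) (hw1 : ∀ j, w j ≤ (n : ℝ) - (c j : ℝ)) :
    (∑ j, v j) / (∑ j, (c j : ℝ)) - (∑ j, w j) / (∑ j, ((n : ℝ) - (c j : ℝ))) ≤
      (1 / (Fintype.card ι : ℝ)) * (∑ j, (v j / (c j : ℝ) - w j / ((n : ℝ) - (c j : ℝ))))
        + 6 * Δ / (τ - 3 * Δ) + 6 * Δ / (1 - τ + 3 * Δ) := by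
  have hn0 : (0:ℝ) < n := by exact_mod_cast hn
  have habs : ∀ j, -(3 * n * Δ) ≤ (c j : ℝ) - n * τ ∧ (c j : ℝ) - n * τ ≤ 3 * n * Δ :=
    fun j => abs_le.mp (hcτ j)
  -- v part
  have ha1 : (0:ℝ) < n * (τ - 3 * Δ) := by nlinarith
  have h1 := ratio_sum_upper (n * (τ - 3 * Δ)) (n * (τ + 3 * Δ)) ha1
      (fun j => (c j : ℝ)) v
      (fun j => by show (n:ℝ) * (τ - 3 * Δ) ≤ (c j : ℝ); have := (habs j).1; nlinarith)
      (fun j => by show (c j : ℝ) ≤ (n:ℝ) * (τ + 3 * Δ); have := (habs j).2; nlinarith)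
      hv0 hv1
  -- w part
  have ha2 : (0:ℝ) < n * (1 - τ - 3 * Δ) := by nlinarith
  have h2 := ratio_sum_lower (n * (1 - τ - 3 * Δ)) (n * (1 - τ + 3 * Δ)) ha2
      (fun j => (n : ℝ) - (c j : ℝ)) w
      (fun j => by
        show (n:ℝ) * (1 - τ - 3 * Δ) ≤ (n:ℝ) - (c j : ℝ); have := (habs j).2; nlinarith)
      (fun j => by
        show (n:ℝ) - (c j : ℝ) ≤ (n:ℝ) * (1 - τ + 3 * Δ); have := (habs j).1; nlinarith)
      hw0 hw1
  have he1 : (n * (τ + 3 * Δ) - n * (τ - 3 * Δ)) / (n * (τ - 3 * Δ))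
      = 6 * Δ / (τ - 3 * Δ) := by
    rw [div_eq_div_iff ha1.ne' (by nlinarith : (0:ℝ) < τ - 3 * Δ).ne']
    ring
  have he2 : (n * (1 - τ + 3 * Δ) - n * (1 - τ - 3 * Δ)) / (n * (1 - τ + 3 * Δ))
      = 6 * Δ / (1 - τ + 3 * Δ) := by
    rw [div_eq_div_iff (by nlinarith : (0:ℝ) < (n:ℝ) * (1 - τ + 3 * Δ)).ne'
      (by nlinarith : (0:ℝ) < 1 - τ + 3 * Δ).ne']
    ring
  rw [he1] at h1
  rw [he2] at h2
  have hsplit : (∑ j, (v j / (c j : ℝ) - w j / ((n : ℝ) - (c j : ℝ))))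
      = (∑ j, v j / (c j : ℝ)) - ∑ j, w j / ((n : ℝ) - (c j : ℝ)) :=
    Finset.sum_sub_distrib _ _
  rw [hsplit, mul_sub]
  linarith
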